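/- For every integer n ≥ 1 and every i ∈ {1,…,n}, with x_j = cos((2j−1)π/(2n)) for j = 1,…,n, one has ∏_{j∈{1,…,n}, j≠i} (x_i − x_j) = (−1)^{i−1} · 2^{1−n} · n / sin((2i−1)π/(2n)). -/

import Mathlib

/-- The `j`-th Chebyshev point of degree `n`: `x_j = cos((2j-1)π/(2n))`. -/
noncomputable def chebPt (n j : ℕ) : ℝ :=
  Real.cos ((2 * (j : ℝ) - 1) * Real.pi / (2 * (n : ℝ)))


open Polynomial Polynomial.Chebyshev Real Finset

section aux

lemma T_deg (n : ℕ) :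
    ((T ℝ ((n:ℤ)+1)).natDegree ≤ n+1 ∧ (T ℝ ((n:ℤ)+1)).coeff (n+1) = 2^n) ∧
    ((T ℝ ((n:ℤ)+2)).natDegree ≤ n+2 ∧ (T ℝ ((n:ℤ)+2)).coeff (n+2) = 2^(n+1)) := by
  induction n with
  | zero =>
    refine ⟨⟨?_, ?_⟩, ⟨?_, ?_⟩⟩ <;> simp [T_one, T_two] <;> compute_degree!
  | succ n ih =>
    obtain ⟨⟨h1d, h1c⟩, ⟨h2d, h2c⟩⟩ := ih
    have key : T ℝ ((n:ℤ)+3) = 2 * X * T ℝ ((n:ℤ)+2) - T ℝ ((n:ℤ)+1) := by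
      rw [show ((n:ℤ)+3) = ((n:ℤ)+1)+2 by ring, show ((n:ℤ)+2) = ((n:ℤ)+1)+1 by ring]
      exact T_add_two ℝ ((n:ℤ)+1)
    refine ⟨⟨by exact_mod_cast h2d, by push_cast; exact_mod_cast h2c⟩, ?_, ?_⟩
    · push_cast
      rw [show ((n:ℤ)+1)+2 = (n:ℤ)+3 by ring, key]
      refine le_trans (natDegree_sub_le _ _) ?_
      simp only [max_le_iff]
      constructor
      · refine le_trans (natDegree_mul_le) ?_
        have : (2 * X : ℝ[X]).natDegree ≤ 1 := by compute_degree
        omega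
      · omega
    · push_cast
      rw [show ((n:ℤ)+1)+2 = (n:ℤ)+3 by ring, key]
      rw [coeff_sub, coeff_eq_zero_of_natDegree_lt (by omega : (T ℝ ((n:ℤ)+1)).natDegree < n+3)]
      have h2X : (2 * X : ℝ[X]) = C 2 * X := by rw [(map_ofNat Polynomial.C 2 : (Polynomial.C 2 : ℝ[X]) = 2)]
      rw [h2X, mul_assoc, coeff_C_mul, show n+1+2 = (n+2)+1 by ring, coeff_X_mul, h2c]
      ring


lemma cheb_theta_pos {n j : ℕ} (hj : j ∈ Finset.Icc 1 n) :
    0 < (2 * (j : ℝ) - 1) * π / (2 * (n : ℝ)) := by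
  obtain ⟨h1, h2⟩ := Finset.mem_Icc.mp hj
  have hn : 0 < (n:ℝ) := by
    have : 1 ≤ n := le_trans h1 h2
    exact_mod_cast Nat.pos_of_ne_zero (by omega)
  have : (1:ℝ) ≤ (j:ℝ) := by exact_mod_cast h1
  have hp := Real.pi_pos
  apply div_pos (by nlinarith) (by linarith)

lemma cheb_theta_lt_pi {n j : ℕ} (hj : j ∈ Finset.Icc 1 n) :
    (2 * (j : ℝ) - 1) * π / (2 * (n : ℝ)) < π := by
  obtain ⟨h1, h2⟩ := Finset.mem_Icc.mp hj
  have hn : 0 < (n:ℝ) := by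
    have : 1 ≤ n := le_trans h1 h2
    exact_mod_cast Nat.pos_of_ne_zero (by omega)
  have hjn : (j:ℝ) ≤ (n:ℝ) := by exact_mod_cast h2
  have hp := Real.pi_pos
  rw [div_lt_iff₀ (by linarith)]
  nlinarith

lemma cheb_inj (n : ℕ) : Set.InjOn (chebPt n) (Finset.Icc 1 n) := by
  intro j hj k hk h
  simp only [Finset.coe_Icc, Set.mem_Icc] at hj hk
  have hj' : j ∈ Finset.Icc 1 n := Finset.mem_Icc.mpr hj
  have hk' : k ∈ Finset.Icc 1 n := Finset.mem_Icc.mpr hk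
  have h1 := cheb_theta_pos hj'
  have h2 := cheb_theta_lt_pi hj'
  have h3 := cheb_theta_pos hk'
  have h4 := cheb_theta_lt_pi hk'
  have := Real.injOn_cos (Set.mem_Icc.mpr ⟨le_of_lt h1, le_of_lt h2⟩)
    (Set.mem_Icc.mpr ⟨le_of_lt h3, le_of_lt h4⟩) h
  have hn : (0:ℝ) < (n:ℝ) := by
    have : 1 ≤ n := le_trans hj.1 hj.2
    exact_mod_cast Nat.pos_of_ne_zero (by omega)
  have hp := Real.pi_pos
  field_simp at this
  exact_mod_cast (by linarith : (j:ℝ) = k)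

lemma n_mul_theta (n j : ℕ) (hn : 1 ≤ n) :
    (n:ℝ) * ((2 * (j : ℝ) - 1) * π / (2 * (n : ℝ))) = (2 * (j:ℝ) - 1) * π / 2 := by
  have hn : (0:ℝ) < (n:ℝ) := by exact_mod_cast Nat.pos_of_ne_zero (by omega)
  field_simp

lemma cos_odd_pi_div_two (j : ℕ) (hj : 1 ≤ j) : Real.cos ((2 * (j:ℝ) - 1) * π / 2) = 0 := by
  have : (2 * (j:ℝ) - 1) * π / 2 = ((j - 1 : ℕ) : ℝ) * π + π / 2 := by
    have : (1:ℝ) ≤ (j:ℝ) := by exact_mod_cast hj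
    push_cast [Nat.cast_sub hj]
    ring
  rw [this, Real.cos_add, Real.cos_pi_div_two, Real.sin_pi_div_two, Real.sin_nat_mul_pi]
  ring

lemma sin_odd_pi_div_two (j : ℕ) (hj : 1 ≤ j) :
    Real.sin ((2 * (j:ℝ) - 1) * π / 2) = (-1 : ℝ) ^ (j - 1) := by
  have h : (2 * (j:ℝ) - 1) * π / 2 = ((j - 1 : ℕ) : ℝ) * π + π / 2 := by
    push_cast [Nat.cast_sub hj]
    ring
  rw [h, Real.sin_add, Real.cos_pi_div_two, Real.sin_pi_div_two, Real.sin_nat_mul_pi]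
  have : Real.cos (((j-1:ℕ):ℝ) * π) = (-1:ℝ)^(j-1) := by
    have := Real.cos_int_mul_pi_sub 0 (j-1 : ℕ)
    simpa using this
  rw [this]; ring

end aux

/-- For `n ≥ 1` and `i ∈ {1,…,n}`,
`∏_{j ≠ i} (x_i - x_j) = (-1)^{i-1} · 2^{1-n} · n / sin((2i-1)π/(2n))`. -/
theorem stmt_3 (n : ℕ) (hn : 1 ≤ n) (i : ℕ) (hi : i ∈ Finset.Icc 1 n) :
    ∏ j ∈ (Finset.Icc 1 n).erase i, (chebPt n i - chebPt n j) =
      (-1 : ℝ) ^ (i - 1) * (2 : ℝ) ^ (1 - (n : ℤ)) * n /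
        Real.sin ((2 * (i : ℝ) - 1) * Real.pi / (2 * (n : ℝ))) := by
  classical
  obtain ⟨hi1, hi2⟩ := Finset.mem_Icc.mp hi
  set θ : ℕ → ℝ := fun j => (2 * (j : ℝ) - 1) * π / (2 * (n : ℝ)) with hθ
  -- basic facts about T ℝ n
  obtain ⟨m, rfl⟩ : ∃ m, n = m + 1 := ⟨n - 1, by omega⟩
  set n := m + 1 with hn'
  have hTd : (T ℝ (n:ℤ)).natDegree ≤ n ∧ (T ℝ (n:ℤ)).coeff n = 2^m := by
    have := (T_deg m).1
    have hc : ((m:ℤ)+1) = (n:ℤ) := by push_cast [hn']; ring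
    rw [hc] at this
    exact this
  obtain ⟨h1, h2⟩ := hTd
  have hcne : (T ℝ (n:ℤ)).coeff n ≠ 0 := by rw [h2]; positivity
  have hd : (T ℝ (n:ℤ)).natDegree = n := le_antisymm h1 (le_natDegree_of_ne_zero hcne)
  have hlc : (T ℝ (n:ℤ)).leadingCoeff = 2^m := by rw [Polynomial.leadingCoeff, hd, h2]
  have hT0 : T ℝ (n:ℤ) ≠ 0 := fun h => hcne (by simp [h])
  -- the nodal polynomial
  set q : ℝ[X] := C ((2:ℝ)^m) * Lagrange.nodal (Finset.Icc 1 n) (chebPt n) with hq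
  have hcard : #(Finset.Icc 1 n) = n := by rw [Nat.card_Icc]; omega
  have hqd : q.degree = (n : ℕ) := by
    rw [hq, degree_C_mul (by positivity), Lagrange.degree_nodal, hcard]
  have hpd : (T ℝ (n:ℤ)).degree = (n : ℕ) := by
    rw [degree_eq_natDegree hT0, hd]
  have hqlc : q.leadingCoeff = 2^m := by
    rw [hq, leadingCoeff_mul, leadingCoeff_C, Lagrange.nodal_monic.leadingCoeff, mul_one]
  -- T vanishes at the nodes
  have hTeval : ∀ j ∈ Finset.Icc 1 n, (T ℝ (n:ℤ)).eval (chebPt n j) = 0 := by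
    intro j hj
    obtain ⟨hj1, hj2⟩ := Finset.mem_Icc.mp hj
    have : (T ℝ (n:ℤ)).eval (chebPt n j) = Real.cos ((n:ℤ) * θ j) := by
      rw [chebPt]; exact T_real_cos _ _
    rw [this, Int.cast_natCast, hθ]
    simp only
    rw [n_mul_theta n j hn, cos_odd_pi_div_two j hj1]
  -- factorization
  have hfac : T ℝ (n:ℤ) = q := by
    have hsub : T ℝ (n:ℤ) - q = 0 := by
      apply Polynomial.eq_zero_of_degree_lt_of_eval_index_eq_zero (Finset.Icc 1 n)
        (cheb_inj n)
      · rw [hcard]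
        calc (T ℝ (n:ℤ) - q).degree < (T ℝ (n:ℤ)).degree :=
              degree_sub_lt (hpd.trans hqd.symm) hT0 (hlc.trans hqlc.symm)
          _ = (n:ℕ) := hpd
      · intro j hj
        rw [eval_sub, hTeval j hj, hq, eval_mul, eval_C,
          Lagrange.eval_nodal_at_node hj]
        ring
    exact sub_eq_zero.mp hsub
  -- derivative identity
  set P := ∏ j ∈ (Finset.Icc 1 n).erase i, (chebPt n i - chebPt n j) with hP
  have hsθ : 0 < Real.sin (θ i) :=
    Real.sin_pos_of_pos_of_lt_pi (cheb_theta_pos hi) (cheb_theta_lt_pi hi)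
  have hUeval : (U ℝ ((n:ℤ)-1)).eval (Real.cos (θ i)) * Real.sin (θ i) = (-1:ℝ)^(i-1) := by
    rw [U_real_cos (θ i) ((n:ℤ)-1)]
    have harg : ((((n:ℤ)-1 : ℤ) : ℝ) + 1) * θ i = (n:ℝ) * θ i := by push_cast; ring
    rw [harg, hθ]
    simp only
    rw [n_mul_theta n i hn, sin_odd_pi_div_two i hi1]
  have hLHS : (derivative (T ℝ (n:ℤ))).eval (chebPt n i)
      = (n:ℝ) * (U ℝ ((n:ℤ)-1)).eval (Real.cos (θ i)) := by
    rw [T_derivative_eq_U, eval_mul, eval_intCast]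
    push_cast
    rfl
  have hRHS : (derivative q).eval (chebPt n i) = 2^m * P := by
    rw [hq, derivative_C_mul, eval_mul, eval_C,
      Lagrange.eval_nodal_derivative_eval_node_eq hi, Lagrange.eval_nodal, hP]
  have key : 2^m * P * Real.sin (θ i) = (n:ℝ) * (-1:ℝ)^(i-1) := by
    have := congrArg (fun p => Polynomial.eval (chebPt n i) p) (congrArg derivative hfac)
    rw [hLHS, hRHS] at this
    rw [← this, mul_assoc, hUeval]
  have h2pow : (2:ℝ)^(1-(n:ℤ)) * 2^m = 1 := by
    rw [show (1-(n:ℤ)) = -(m:ℤ) by omega, zpow_neg, zpow_natCast]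
    exact inv_mul_cancel₀ (by positivity)
  have hgoal : Real.sin ((2*(i:ℝ)-1)*π/(2*(n:ℝ))) = Real.sin (θ i) := rfl
  rw [hgoal, eq_div_iff hsθ.ne']
  linear_combination (2:ℝ)^(1-(n:ℤ)) * key - P * Real.sin (θ i) * h2pow
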